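/- Let P be a transition matrix on 𝒳. Then: (i) (symmetry) for every α ∈ (0,1), η^{(R_α)}(P) = η^{(R_{1−α})}(P) and η^{(D_α)}(P) = η^{(D_{1−α})}(P); (ii) (equivalence) for 0 < α < β < 1, (α/β)·((1−β)/(1−α)) · η^{(R_β)}(P) ≤ η^{(R_α)}(P) ≤ (β/α)·((1−α)/(1−β)) · η^{(R_β)}(P). -/

import Mathlib

open Finset

/-- A transition matrix on a finite state space `X`: nonnegative entries, rows sum to one. -/
def IsTransMat {X : Type*} [Fintype X] (M : X → X → ℝ) : Prop :=
  (∀ x y, 0 ≤ M x y) ∧ ∀ x, ∑ y, M x y = 1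

/-- The π-weighted α-divergence between transition matrices (for `α ∈ (0,1)` a term with
`L x y = 0` contributes `0`, which the formula realises since `a / 0 = 0` and `0 ^ α = 0`). -/
noncomputable def Dalpha {X : Type*} [Fintype X] (π : X → ℝ) (α : ℝ) (M L : X → X → ℝ) : ℝ :=
  (1 / (α - 1)) * ((∑ x, ∑ y, π x * L x y * (M x y / L x y) ^ α) - 1)

/-- The π-weighted Rényi divergence between transition matrices. -/
noncomputable def Ralpha {X : Type*} [Fintype X] (π : X → ℝ) (α : ℝ) (M L : X → X → ℝ) : ℝ :=
  (1 / (α - 1)) * Real.log (1 + (α - 1) * Dalpha π α M L)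

/-- Matrix product of transition matrices. -/
def matMul {X : Type*} [Fintype X] (M P : X → X → ℝ) : X → X → ℝ :=
  fun x y => ∑ z, M x z * P z y

/-- The α-divergence ergodicity coefficient on the space of transition matrices. -/
noncomputable def etaD {X : Type*} [Fintype X] (π : X → ℝ) (α : ℝ) (P : X → X → ℝ) : ℝ :=
  sSup {r : ℝ | ∃ M L : X → X → ℝ, IsTransMat M ∧ IsTransMat L ∧ M ≠ L ∧
    0 < Dalpha π α M L ∧
    r = Dalpha π α (matMul M P) (matMul L P) / Dalpha π α M L}

/-- The Rényi ergodicity coefficient on the space of transition matrices. -/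
noncomputable def etaR {X : Type*} [Fintype X] (π : X → ℝ) (α : ℝ) (P : X → X → ℝ) : ℝ :=
  sSup {r : ℝ | ∃ M L : X → X → ℝ, IsTransMat M ∧ IsTransMat L ∧ M ≠ L ∧
    0 < Ralpha π α M L ∧
    r = Ralpha π α (matMul M P) (matMul L P) / Ralpha π α M L}

noncomputable def Tsum {X : Type*} [Fintype X] (π : X → ℝ) (γ : ℝ) (M L : X → X → ℝ) : ℝ :=
  ∑ x, ∑ y, π x * (M x y ^ γ * L x y ^ (1 - γ))

section helpers
variable {X : Type*} [Fintype X]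
variable {π : X → ℝ} {M L P : X → X → ℝ} {γ α β : ℝ}

lemma rpow_mul_rpow_one_sub {p γ : ℝ} (hp : 0 ≤ p) (h0 : γ ≠ 0) (h1 : γ ≠ 1) :
    p ^ γ * p ^ (1 - γ) = p := by
  rcases hp.eq_or_lt with h | h
  · rw [← h, Real.zero_rpow h0, zero_mul]
  · rw [← Real.rpow_add h, add_sub_cancel, Real.rpow_one]

lemma holder_sum {ι : Type*} (s : Finset ι) (f g : ι → ℝ) (hf : ∀ i ∈ s, 0 ≤ f i)
    (hg : ∀ i ∈ s, 0 ≤ g i) {t : ℝ} (ht : t ∈ Set.Ioo (0:ℝ) 1) :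
    ∑ i ∈ s, (f i) ^ t * (g i) ^ (1 - t) ≤ (∑ i ∈ s, f i) ^ t * (∑ i ∈ s, g i) ^ (1 - t) := by
  obtain ⟨ht0, ht1⟩ := ht
  by_cases hF : ∑ i ∈ s, f i = 0
  · have hz : ∀ i ∈ s, f i = 0 := (Finset.sum_eq_zero_iff_of_nonneg hf).1 hF
    have : ∑ i ∈ s, (f i) ^ t * (g i) ^ (1 - t) = 0 := by
      apply Finset.sum_eq_zero
      intro i hi
      rw [hz i hi, Real.zero_rpow (ne_of_gt ht0), zero_mul]
    rw [this, hF, Real.zero_rpow (ne_of_gt ht0), zero_mul]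
  by_cases hG : ∑ i ∈ s, g i = 0
  · have hz : ∀ i ∈ s, g i = 0 := (Finset.sum_eq_zero_iff_of_nonneg hg).1 hG
    have : ∑ i ∈ s, (f i) ^ t * (g i) ^ (1 - t) = 0 := by
      apply Finset.sum_eq_zero
      intro i hi
      rw [hz i hi, Real.zero_rpow (by linarith : (1:ℝ) - t ≠ 0), mul_zero]
    rw [this, hG, Real.zero_rpow (by linarith : (1:ℝ) - t ≠ 0), mul_zero]
  have hA : 0 < ∑ i ∈ s, f i := (Finset.sum_nonneg hf).lt_of_ne (Ne.symm hF)
  have hB : 0 < ∑ i ∈ s, g i := (Finset.sum_nonneg hg).lt_of_ne (Ne.symm hG)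
  set A := ∑ i ∈ s, f i with hAdef
  set B := ∑ i ∈ s, g i with hBdef
  have hAt : (0:ℝ) < A ^ t := Real.rpow_pos_of_pos hA t
  have hBt : (0:ℝ) < B ^ (1 - t) := Real.rpow_pos_of_pos hB (1 - t)
  have key : ∀ i ∈ s, (f i) ^ t * (g i) ^ (1 - t) ≤
      A ^ t * B ^ (1 - t) * (t * (f i / A) + (1 - t) * (g i / B)) := by
    intro i hi
    have h1 : (f i / A) ^ t * (g i / B) ^ (1 - t) ≤ t * (f i / A) + (1 - t) * (g i / B) :=
      Real.geom_mean_le_arith_mean2_weighted (le_of_lt ht0) (by linarith)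
        (div_nonneg (hf i hi) hA.le) (div_nonneg (hg i hi) hB.le) (by ring)
    have h2 : (f i) ^ t * (g i) ^ (1 - t) =
        A ^ t * B ^ (1 - t) * ((f i / A) ^ t * (g i / B) ^ (1 - t)) := by
      rw [Real.div_rpow (hf i hi) hA.le, Real.div_rpow (hg i hi) hB.le]
      field_simp
    rw [h2]
    exact mul_le_mul_of_nonneg_left h1 (by positivity)
  calc ∑ i ∈ s, (f i) ^ t * (g i) ^ (1 - t)
      ≤ ∑ i ∈ s, A ^ t * B ^ (1 - t) * (t * (f i / A) + (1 - t) * (g i / B)) :=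
        Finset.sum_le_sum key
    _ = A ^ t * B ^ (1 - t) := by
        rw [← Finset.mul_sum]
        have : ∑ i ∈ s, (t * (f i / A) + (1 - t) * (g i / B)) = 1 := by
          rw [Finset.sum_add_distrib]
          rw [← Finset.mul_sum, ← Finset.mul_sum, ← Finset.sum_div, ← Finset.sum_div,
            ← hAdef, ← hBdef, div_self (ne_of_gt hA), div_self (ne_of_gt hB)]
          ring
        rw [this, mul_one]


lemma matMul_trans (hM : IsTransMat M) (hP : IsTransMat P) : IsTransMat (matMul M P) := by
  constructor
  · intro x y
    exact Finset.sum_nonneg fun z _ => mul_nonneg (hM.1 x z) (hP.1 z y)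
  · intro x
    unfold matMul
    rw [Finset.sum_comm]
    simp only [← Finset.mul_sum]
    simp only [hP.2, mul_one]
    exact hM.2 x

lemma Tsum_nonneg (hπ : ∀ x, 0 ≤ π x) (hM : ∀ x y, 0 ≤ M x y) (hL : ∀ x y, 0 ≤ L x y) :
    0 ≤ Tsum π γ M L :=
  Finset.sum_nonneg fun x _ => Finset.sum_nonneg fun y _ =>
    mul_nonneg (hπ x) (mul_nonneg (Real.rpow_nonneg (hM x y) _) (Real.rpow_nonneg (hL x y) _))

lemma Tsum_one (hπ1 : ∑ x, π x = 1) (hM : IsTransMat M) : Tsum π 1 M L = 1 := by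
  unfold Tsum
  simp only [Real.rpow_one, sub_self, Real.rpow_zero, mul_one]
  simp only [← Finset.mul_sum, hM.2, mul_one]
  exact hπ1

lemma Tsum_zero (hπ1 : ∑ x, π x = 1) (hL : IsTransMat L) : Tsum π 0 M L = 1 := by
  unfold Tsum
  simp only [Real.rpow_zero, sub_zero, Real.rpow_one, one_mul]
  simp only [← Finset.mul_sum, hL.2, mul_one]
  exact hπ1

lemma Tsum_swap : Tsum π (1 - γ) L M = Tsum π γ M L := by
  unfold Tsum
  rw [sub_sub_cancel]
  exact Finset.sum_congr rfl fun x _ => Finset.sum_congr rfl fun y _ => by ring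

lemma Tsum_self (hπ1 : ∑ x, π x = 1) (hM : IsTransMat M) (h0 : γ ≠ 0) (h1 : γ ≠ 1) :
    Tsum π γ M M = 1 := by
  unfold Tsum
  have : ∀ x y, M x y ^ γ * M x y ^ (1 - γ) = M x y := by
    intro x y
    rcases (hM.1 x y).eq_or_lt with h | h
    · rw [← h, Real.zero_rpow h0, zero_mul]
    · rw [← Real.rpow_add h, add_sub_cancel, Real.rpow_one]
  simp only [this]
  simp only [← Finset.mul_sum, hM.2, mul_one]
  exact hπ1

lemma sum_rewrite (hγ : γ ∈ Set.Ioo (0:ℝ) 1) (hM : ∀ x y, 0 ≤ M x y) (hL : ∀ x y, 0 ≤ L x y) :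
    ∑ x, ∑ y, π x * L x y * (M x y / L x y) ^ γ = Tsum π γ M L := by
  refine Finset.sum_congr rfl fun x _ => Finset.sum_congr rfl fun y _ => ?_
  rcases (hL x y).eq_or_lt with h | h
  · rw [← h, Real.zero_rpow (by linarith [hγ.2] : (1:ℝ) - γ ≠ 0)]
    ring
  · rcases (hM x y).eq_or_lt with h2 | h2
    · rw [← h2, zero_div, Real.zero_rpow (ne_of_gt hγ.1)]
      ring
    · rw [Real.div_rpow (hM x y) h.le, Real.rpow_sub h, Real.rpow_one]
      field_simp

lemma Tsum_pos_iff (hπ : ∀ x, 0 < π x) (hγ : γ ∈ Set.Ioo (0:ℝ) 1)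
    (hM : ∀ x y, 0 ≤ M x y) (hL : ∀ x y, 0 ≤ L x y) :
    0 < Tsum π γ M L ↔ ∃ x y, 0 < M x y ∧ 0 < L x y := by
  constructor
  · intro hpos
    by_contra h
    push_neg at h
    have : Tsum π γ M L = 0 := by
      apply Finset.sum_eq_zero
      intro x _
      apply Finset.sum_eq_zero
      intro y _
      rcases (hM x y).eq_or_lt with h2 | h2
      · rw [← h2, Real.zero_rpow (ne_of_gt hγ.1)]; ring
      · have : L x y = 0 := le_antisymm (h x y h2) (hL x y)
        rw [this, Real.zero_rpow (by linarith [hγ.2] : (1:ℝ) - γ ≠ 0)]; ring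
    rw [this] at hpos; exact lt_irrefl 0 hpos
  · rintro ⟨x, y, hMxy, hLxy⟩
    apply Finset.sum_pos'
    · intro i _
      exact Finset.sum_nonneg fun j _ =>
        mul_nonneg (hπ i).le (mul_nonneg (Real.rpow_nonneg (hM i j) _) (Real.rpow_nonneg (hL i j) _))
    · refine ⟨x, Finset.mem_univ x, Finset.sum_pos' ?_ ⟨y, Finset.mem_univ y, ?_⟩⟩
      · intro j _
        exact mul_nonneg (hπ x).le
          (mul_nonneg (Real.rpow_nonneg (hM x j) _) (Real.rpow_nonneg (hL x j) _))
      · exact mul_pos (hπ x)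
          (mul_pos (Real.rpow_pos_of_pos hMxy _) (Real.rpow_pos_of_pos hLxy _))

lemma geom_strict {a b : ℝ} (ha : 0 ≤ a) (hb : 0 ≤ b) (hγ : γ ∈ Set.Ioo (0:ℝ) 1)
    (hne : a ≠ b) : a ^ γ * b ^ (1 - γ) < γ * a + (1 - γ) * b := by
  obtain ⟨h0, h1⟩ := hγ
  rcases ha.eq_or_lt with h | h
  · rw [← h, Real.zero_rpow (ne_of_gt h0), zero_mul, mul_zero, zero_add]
    have hb' : 0 < b := (hb.lt_of_ne (by simpa [← h] using hne))
    have : (0:ℝ) < 1 - γ := by linarith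
    positivity
  rcases hb.eq_or_lt with h' | h'
  · rw [← h', Real.zero_rpow (by linarith : (1:ℝ) - γ ≠ 0), mul_zero, mul_zero, add_zero]
    positivity
  · have h1γ : (0:ℝ) < 1 - γ := by linarith
    have hlog := strictConcaveOn_log_Ioi.2 (Set.mem_Ioi.2 h) (Set.mem_Ioi.2 h') hne h0 h1γ
      (by ring)
    have hl : Real.log (a ^ γ * b ^ (1 - γ)) = γ * Real.log a + (1 - γ) * Real.log b := by
      rw [Real.log_mul (ne_of_gt (Real.rpow_pos_of_pos h _)) (ne_of_gt (Real.rpow_pos_of_pos h' _)),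
        Real.log_rpow h, Real.log_rpow h']
    have h2 : Real.log (a ^ γ * b ^ (1 - γ)) < Real.log (γ * a + (1 - γ) * b) := by
      rw [hl]
      simpa [smul_eq_mul] using hlog
    have hpos : (0:ℝ) < a ^ γ * b ^ (1 - γ) :=
      mul_pos (Real.rpow_pos_of_pos h _) (Real.rpow_pos_of_pos h' _)
    exact (Real.log_lt_log_iff hpos (by nlinarith)).1 h2

lemma Tsum_le_one (hπ : ∀ x, 0 < π x) (hπ1 : ∑ x, π x = 1) (hγ : γ ∈ Set.Ioo (0:ℝ) 1)
    (hM : IsTransMat M) (hL : IsTransMat L) : Tsum π γ M L ≤ 1 := by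
  have key : ∀ x, ∑ y, M x y ^ γ * L x y ^ (1 - γ) ≤ 1 := by
    intro x
    have h1 : ∑ y, M x y ^ γ * L x y ^ (1 - γ) ≤ ∑ y, (γ * M x y + (1 - γ) * L x y) := by
      apply Finset.sum_le_sum
      intro y _
      exact Real.geom_mean_le_arith_mean2_weighted hγ.1.le (by linarith [hγ.2])
        (hM.1 x y) (hL.1 x y) (by ring)
    have h2 : ∑ y, (γ * M x y + (1 - γ) * L x y) = 1 := by
      rw [Finset.sum_add_distrib, ← Finset.mul_sum, ← Finset.mul_sum, hM.2, hL.2]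
      ring
    linarith
  calc Tsum π γ M L = ∑ x, π x * ∑ y, M x y ^ γ * L x y ^ (1 - γ) := by
        unfold Tsum; exact Finset.sum_congr rfl fun x _ => (Finset.mul_sum _ _ _).symm
    _ ≤ ∑ x, π x * 1 := Finset.sum_le_sum fun x _ =>
        mul_le_mul_of_nonneg_left (key x) (hπ x).le
    _ = 1 := by simp [hπ1]

lemma Tsum_lt_one (hπ : ∀ x, 0 < π x) (hπ1 : ∑ x, π x = 1) (hγ : γ ∈ Set.Ioo (0:ℝ) 1)
    (hM : IsTransMat M) (hL : IsTransMat L) (hne : M ≠ L) : Tsum π γ M L < 1 := by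
  obtain ⟨x₀, hx₀⟩ : ∃ x, M x ≠ L x := by
    by_contra h; push_neg at h; exact hne (funext h)
  obtain ⟨y₀, hy₀⟩ : ∃ y, M x₀ y ≠ L x₀ y := by
    by_contra h; push_neg at h; exact hx₀ (funext h)
  have inner_le : ∀ x, ∑ y, M x y ^ γ * L x y ^ (1 - γ) ≤ 1 := by
    intro x
    have h1 : ∑ y, M x y ^ γ * L x y ^ (1 - γ) ≤ ∑ y, (γ * M x y + (1 - γ) * L x y) :=
      Finset.sum_le_sum fun y _ => Real.geom_mean_le_arith_mean2_weighted hγ.1.le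
        (by linarith [hγ.2]) (hM.1 x y) (hL.1 x y) (by ring)
    have h2 : ∑ y, (γ * M x y + (1 - γ) * L x y) = 1 := by
      rw [Finset.sum_add_distrib, ← Finset.mul_sum, ← Finset.mul_sum, hM.2, hL.2]; ring
    linarith
  have inner_lt : ∑ y, M x₀ y ^ γ * L x₀ y ^ (1 - γ) < 1 := by
    have h1 : ∑ y, M x₀ y ^ γ * L x₀ y ^ (1 - γ) < ∑ y, (γ * M x₀ y + (1 - γ) * L x₀ y) := by
      apply Finset.sum_lt_sum
      · intro y _
        exact Real.geom_mean_le_arith_mean2_weighted hγ.1.le (by linarith [hγ.2])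
          (hM.1 x₀ y) (hL.1 x₀ y) (by ring)
      · exact ⟨y₀, Finset.mem_univ y₀, geom_strict (hM.1 x₀ y₀) (hL.1 x₀ y₀) hγ hy₀⟩
    have h2 : ∑ y, (γ * M x₀ y + (1 - γ) * L x₀ y) = 1 := by
      rw [Finset.sum_add_distrib, ← Finset.mul_sum, ← Finset.mul_sum, hM.2, hL.2]; ring
    linarith
  calc Tsum π γ M L = ∑ x, π x * ∑ y, M x y ^ γ * L x y ^ (1 - γ) := by
        unfold Tsum; exact Finset.sum_congr rfl fun x _ => (Finset.mul_sum _ _ _).symm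
    _ < ∑ x, π x := by
        apply Finset.sum_lt_sum
        · intro x _
          calc π x * ∑ y, M x y ^ γ * L x y ^ (1 - γ) ≤ π x * 1 :=
              mul_le_mul_of_nonneg_left (inner_le x) (hπ x).le
            _ = π x := mul_one _
        · refine ⟨x₀, Finset.mem_univ x₀, ?_⟩
          calc π x₀ * ∑ y, M x₀ y ^ γ * L x₀ y ^ (1 - γ) < π x₀ * 1 :=
              mul_lt_mul_of_pos_left inner_lt (hπ x₀)
            _ = π x₀ := mul_one _
    _ = 1 := hπ1

lemma Tsum_eq_prod : Tsum π γ M L = ∑ p : X × X, π p.1 * (M p.1 p.2 ^ γ * L p.1 p.2 ^ (1 - γ)) := by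
  unfold Tsum
  exact (Fintype.sum_prod_type fun p => π p.1 * (M p.1 p.2 ^ γ * L p.1 p.2 ^ (1 - γ))).symm

lemma interp_pointwise {p m l γ₁ γ₂ t : ℝ} (hp : 0 ≤ p) (hm : 0 ≤ m) (hl : 0 ≤ l)
    (ht : t ∈ Set.Ioo (0:ℝ) 1) (hγ : t * γ₁ + (1 - t) * γ₂ ∈ Set.Ioo (0:ℝ) 1) :
    p * (m ^ (t * γ₁ + (1 - t) * γ₂) * l ^ (1 - (t * γ₁ + (1 - t) * γ₂))) ≤
      (p * (m ^ γ₁ * l ^ (1 - γ₁))) ^ t * (p * (m ^ γ₂ * l ^ (1 - γ₂))) ^ (1 - t) := by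
  set γ := t * γ₁ + (1 - t) * γ₂ with hγdef
  have hRHS : 0 ≤ (p * (m ^ γ₁ * l ^ (1 - γ₁))) ^ t * (p * (m ^ γ₂ * l ^ (1 - γ₂))) ^ (1 - t) :=
    mul_nonneg (Real.rpow_nonneg (by positivity) _) (Real.rpow_nonneg (by positivity) _)
  rcases hp.eq_or_lt with h | hp'
  · subst h; simpa using hRHS
  rcases hm.eq_or_lt with h | hm'
  · subst h; rw [Real.zero_rpow (ne_of_gt hγ.1), zero_mul, mul_zero]; exact hRHS
  rcases hl.eq_or_lt with h | hl'
  · subst h; rw [Real.zero_rpow (by linarith [hγ.2] : (1:ℝ) - γ ≠ 0), mul_zero, mul_zero]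
    exact hRHS
  apply le_of_eq
  have key : ∀ a : ℝ, (0:ℝ) < a → ∀ c : ℝ, a ^ c = Real.exp (Real.log a * c) := by
    intro a ha c; rw [Real.rpow_def_of_pos ha]
  have e1 : ∀ c : ℝ, p * (m ^ c * l ^ (1 - c)) =
      Real.exp (Real.log p + Real.log m * c + Real.log l * (1 - c)) := by
    intro c
    rw [key m hm' c, key l hl' (1 - c), Real.exp_add, Real.exp_add, Real.exp_log hp']
    ring
  rw [e1 γ, e1 γ₁, e1 γ₂, ← Real.exp_mul, ← Real.exp_mul, ← Real.exp_add]
  congr 1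
  rw [hγdef]; ring

lemma Tsum_interp (hπ : ∀ x, 0 ≤ π x) (hM : ∀ x y, 0 ≤ M x y) (hL : ∀ x y, 0 ≤ L x y)
    {γ₁ γ₂ t : ℝ} (ht : t ∈ Set.Ioo (0:ℝ) 1)
    (hγ : t * γ₁ + (1 - t) * γ₂ ∈ Set.Ioo (0:ℝ) 1) :
    Tsum π (t * γ₁ + (1 - t) * γ₂) M L ≤
      (Tsum π γ₁ M L) ^ t * (Tsum π γ₂ M L) ^ (1 - t) := by
  rw [Tsum_eq_prod, Tsum_eq_prod, Tsum_eq_prod]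
  calc ∑ p : X × X, π p.1 * (M p.1 p.2 ^ (t * γ₁ + (1 - t) * γ₂) *
          L p.1 p.2 ^ (1 - (t * γ₁ + (1 - t) * γ₂)))
      ≤ ∑ p : X × X, (π p.1 * (M p.1 p.2 ^ γ₁ * L p.1 p.2 ^ (1 - γ₁))) ^ t *
          (π p.1 * (M p.1 p.2 ^ γ₂ * L p.1 p.2 ^ (1 - γ₂))) ^ (1 - t) :=
        Finset.sum_le_sum fun p _ =>
          interp_pointwise (hπ p.1) (hM p.1 p.2) (hL p.1 p.2) ht hγ
    _ ≤ _ := holder_sum _ _ _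
        (fun p _ => mul_nonneg (hπ p.1) (mul_nonneg (Real.rpow_nonneg (hM p.1 p.2) _)
          (Real.rpow_nonneg (hL p.1 p.2) _)))
        (fun p _ => mul_nonneg (hπ p.1) (mul_nonneg (Real.rpow_nonneg (hM p.1 p.2) _)
          (Real.rpow_nonneg (hL p.1 p.2) _))) ht

lemma Tsum_dp (hπ : ∀ x, 0 ≤ π x) (hγ : γ ∈ Set.Ioo (0:ℝ) 1)
    (hM : ∀ x y, 0 ≤ M x y) (hL : ∀ x y, 0 ≤ L x y) (hP : IsTransMat P) :
    Tsum π γ M L ≤ Tsum π γ (matMul M P) (matMul L P) := by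
  have inner : ∀ x, ∑ z, M x z ^ γ * L x z ^ (1 - γ) ≤
      ∑ y, (matMul M P) x y ^ γ * (matMul L P) x y ^ (1 - γ) := by
    intro x
    have step1 : ∑ z, M x z ^ γ * L x z ^ (1 - γ) =
        ∑ y, ∑ z, (M x z * P z y) ^ γ * (L x z * P z y) ^ (1 - γ) := by
      rw [Finset.sum_comm]
      refine Finset.sum_congr rfl fun z _ => ?_
      have : ∀ y, (M x z * P z y) ^ γ * (L x z * P z y) ^ (1 - γ) =
          M x z ^ γ * L x z ^ (1 - γ) * P z y := by
        intro y
        rw [Real.mul_rpow (hM x z) (hP.1 z y), Real.mul_rpow (hL x z) (hP.1 z y)]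
        have := rpow_mul_rpow_one_sub (p := P z y) (γ := γ) (hP.1 z y)
          (ne_of_gt hγ.1) (by linarith [hγ.2])
        calc M x z ^ γ * P z y ^ γ * (L x z ^ (1 - γ) * P z y ^ (1 - γ))
            = M x z ^ γ * L x z ^ (1 - γ) * (P z y ^ γ * P z y ^ (1 - γ)) := by ring
          _ = M x z ^ γ * L x z ^ (1 - γ) * P z y := by rw [this]
      simp only [this]
      rw [← Finset.mul_sum, hP.2, mul_one]
    rw [step1]
    apply Finset.sum_le_sum
    intro y _
    exact holder_sum _ _ _ (fun z _ => mul_nonneg (hM x z) (hP.1 z y))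
      (fun z _ => mul_nonneg (hL x z) (hP.1 z y)) hγ
  calc Tsum π γ M L = ∑ x, π x * ∑ z, M x z ^ γ * L x z ^ (1 - γ) := by
        unfold Tsum; exact Finset.sum_congr rfl fun x _ => (Finset.mul_sum _ _ _).symm
    _ ≤ ∑ x, π x * ∑ y, (matMul M P) x y ^ γ * (matMul L P) x y ^ (1 - γ) :=
        Finset.sum_le_sum fun x _ => mul_le_mul_of_nonneg_left (inner x) (hπ x)
    _ = Tsum π γ (matMul M P) (matMul L P) := by
        unfold Tsum; exact Finset.sum_congr rfl fun x _ => (Finset.mul_sum _ _ _)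

lemma Dalpha_eq (hγ : γ ∈ Set.Ioo (0:ℝ) 1) (hM : ∀ x y, 0 ≤ M x y) (hL : ∀ x y, 0 ≤ L x y) :
    Dalpha π γ M L = (Tsum π γ M L - 1) / (γ - 1) := by
  unfold Dalpha
  rw [sum_rewrite hγ hM hL, one_div_mul_eq_div]

lemma Ralpha_eq (hγ : γ ∈ Set.Ioo (0:ℝ) 1) (hM : ∀ x y, 0 ≤ M x y) (hL : ∀ x y, 0 ≤ L x y) :
    Ralpha π γ M L = Real.log (Tsum π γ M L) / (γ - 1) := by
  have hne : γ - 1 ≠ 0 := by have := hγ.2; intro h; simp only [sub_eq_zero] at h; linarith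
  unfold Ralpha
  rw [Dalpha_eq hγ hM hL]
  have h2 : 1 + (γ - 1) * ((Tsum π γ M L - 1) / (γ - 1)) = Tsum π γ M L := by
    field_simp
    ring
  rw [h2, one_div_mul_eq_div]

lemma key_ineq (hπ : ∀ x, 0 ≤ π x) (hπ1 : ∑ x, π x = 1)
    (hM : IsTransMat M) (hL : IsTransMat L)
    (hα : α ∈ Set.Ioo (0:ℝ) 1) (hβ : β ∈ Set.Ioo (0:ℝ) 1) (hab : α < β)
    (hTα : 0 < Tsum π α M L) (hTβ : 0 < Tsum π β M L) :
    Real.log (Tsum π β M L) ≤ (1 - β) / (1 - α) * Real.log (Tsum π α M L) ∧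
    Real.log (Tsum π α M L) ≤ α / β * Real.log (Tsum π β M L) := by
  have h1α : (0:ℝ) < 1 - α := by linarith [hα.2]
  have h1β : (0:ℝ) < 1 - β := by linarith [hβ.2]
  constructor
  · set t := (1 - β) / (1 - α) with htdef
    have ht : t ∈ Set.Ioo (0:ℝ) 1 := by
      constructor
      · exact div_pos h1β h1α
      · rw [div_lt_one h1α]; linarith
    have hcomb : t * α + (1 - t) * 1 = β := by
      rw [htdef]; field_simp; ring
    have h := Tsum_interp (M := M) (L := L) hπ hM.1 hL.1 ht (by rw [hcomb]; exact hβ)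
    rw [hcomb, Tsum_one hπ1 hM, Real.one_rpow, mul_one] at h
    have hlog := Real.log_le_log hTβ h
    rwa [Real.log_rpow hTα] at hlog
  · set t := α / β with htdef
    have ht : t ∈ Set.Ioo (0:ℝ) 1 := by
      constructor
      · exact div_pos hα.1 (lt_trans hα.1 hab)
      · rw [div_lt_one (lt_trans hα.1 hab)]; exact hab
    have hcomb : t * β + (1 - t) * 0 = α := by
      rw [htdef]; field_simp; rw [mul_div_assoc, div_self (ne_of_gt (lt_trans hα.1 hab)), mul_one]
      ring
    have h := Tsum_interp (M := M) (L := L) hπ hM.1 hL.1 ht (by rw [hcomb]; exact hα)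
    rw [hcomb, Tsum_zero hπ1 hL, Real.one_rpow, mul_one] at h
    have hlog := Real.log_le_log hTα h
    rwa [Real.log_rpow hTβ] at hlog

lemma Rpos_iff (hπ : ∀ x, 0 < π x) (hπ1 : ∑ x, π x = 1) (hγ : γ ∈ Set.Ioo (0:ℝ) 1)
    (hM : IsTransMat M) (hL : IsTransMat L) :
    0 < Ralpha π γ M L ↔ (0 < Tsum π γ M L ∧ M ≠ L) := by
  rw [Ralpha_eq hγ hM.1 hL.1]
  have hγ1 : γ - 1 < 0 := by linarith [hγ.2]
  constructor
  · intro h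
    have hlog : Real.log (Tsum π γ M L) < 0 := by
      rcases div_pos_iff.1 h with ⟨_, h2⟩ | ⟨h1, _⟩
      · linarith
      · exact h1
    have hT0 : Tsum π γ M L ≠ 0 := by
      intro he; rw [he, Real.log_zero] at hlog; exact lt_irrefl 0 hlog
    have hTpos : 0 < Tsum π γ M L :=
      ((Tsum_nonneg (fun x => (hπ x).le) hM.1 hL.1).lt_of_ne (Ne.symm hT0))
    refine ⟨hTpos, ?_⟩
    rintro rfl
    rw [Tsum_self hπ1 hM (ne_of_gt hγ.1) (ne_of_lt hγ.2), Real.log_one] at hlog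
    exact lt_irrefl 0 hlog
  · rintro ⟨hTpos, hne⟩
    exact div_pos_of_neg_of_neg
      (Real.log_neg hTpos (Tsum_lt_one hπ hπ1 hγ hM hL hne)) hγ1

lemma ratio_cross {a b a' b' α β : ℝ} (hα : 0 < α) (hαβ : α < β) (hβ : β < 1)
    (ha : a < 0) (hb : b < 0) (ha' : a' ≤ 0) (hb' : b' ≤ 0)
    (ka : b ≤ (1 - β) / (1 - α) * a) (kb : a ≤ α / β * b)
    (ka' : b' ≤ (1 - β) / (1 - α) * a') (kb' : a' ≤ α / β * b') :
    α / β * ((1 - β) / (1 - α)) * (b' / b) ≤ a' / a ∧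
    a' / a ≤ β / α * ((1 - α) / (1 - β)) * (b' / b) := by
  have hβ0 : (0:ℝ) < β := lt_trans hα hαβ
  have h1α : (0:ℝ) < 1 - α := by linarith
  have h1β : (0:ℝ) < 1 - β := by linarith
  have hu : (0:ℝ) < -a := by linarith
  have hv : (0:ℝ) < -b := by linarith
  have hu' : (0:ℝ) ≤ -a' := by linarith
  have hv' : (0:ℝ) ≤ -b' := by linarith
  have h4 : (1 - β) / (1 - α) * (-a) ≤ -b := by nlinarith [ka]
  have h2 : α / β * (-b) ≤ -a := by nlinarith [kb]
  have h4' : (1 - β) / (1 - α) * (-a') ≤ -b' := by nlinarith [ka']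
  have h3 : α / β * (-b') ≤ -a' := by nlinarith [kb']
  have hcd : (0:ℝ) < (1 - β) / (1 - α) := div_pos h1β h1α
  have hce : (0:ℝ) < α / β := div_pos hα hβ0
  rw [← neg_div_neg_eq a' a, ← neg_div_neg_eq b' b]
  constructor
  · rw [mul_div_assoc', div_le_div_iff₀ hv hu]
    calc α / β * ((1 - β) / (1 - α)) * -b' * -a
        = (α / β * -b') * ((1 - β) / (1 - α) * -a) := by ring
      _ ≤ (-a') * (-b) := mul_le_mul h3 h4 (mul_nonneg hcd.le hu.le) hu'
  · rw [mul_div_assoc', div_le_div_iff₀ hu hv]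
    have prod2 : ((1 - β) / (1 - α) * -a') * (α / β * -b) ≤ (-b') * (-a) :=
      mul_le_mul h4' h2 (mul_nonneg hce.le hv.le) hv'
    have hK : (0:ℝ) < β / α * ((1 - α) / (1 - β)) :=
      mul_pos (div_pos hβ0 hα) (div_pos h1α h1β)
    have hne1 : α ≠ 0 := ne_of_gt hα
    have hne2 : β ≠ 0 := ne_of_gt hβ0
    have hne3 : (1:ℝ) - α ≠ 0 := ne_of_gt h1α
    have hne4 : (1:ℝ) - β ≠ 0 := ne_of_gt h1β
    calc (-a') * (-b)
        = (β / α * ((1 - α) / (1 - β))) * (((1 - β) / (1 - α) * -a') * (α / β * -b)) := by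
          field_simp
      _ ≤ (β / α * ((1 - α) / (1 - β))) * ((-b') * (-a)) :=
          mul_le_mul_of_nonneg_left prod2 hK.le
      _ = β / α * ((1 - α) / (1 - β)) * -b' * -a := by ring

lemma div_div_cancel_aux (a c : ℝ) {b : ℝ} (hb : b ≠ 0) : (a / b) / (c / b) = a / c := by
  rw [div_div_div_comm, div_self hb, div_one]

lemma etaR_subset (hπ : ∀ x, 0 < π x) (hπ1 : ∑ x, π x = 1) (hP : IsTransMat P)
    (hα : α ∈ Set.Ioo (0:ℝ) 1) :
    {r : ℝ | ∃ M L : X → X → ℝ, IsTransMat M ∧ IsTransMat L ∧ M ≠ L ∧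
      0 < Ralpha π α M L ∧
      r = Ralpha π α (matMul M P) (matMul L P) / Ralpha π α M L} ⊆
    {r : ℝ | ∃ M L : X → X → ℝ, IsTransMat M ∧ IsTransMat L ∧ M ≠ L ∧
      0 < Ralpha π (1 - α) M L ∧
      r = Ralpha π (1 - α) (matMul M P) (matMul L P) / Ralpha π (1 - α) M L} := by
  rintro r ⟨M, L, hM, hL, hne, hpos, rfl⟩
  have hα' : 1 - α ∈ Set.Ioo (0:ℝ) 1 := ⟨by linarith [hα.2], by linarith [hα.1]⟩
  have hMP := matMul_trans hM hP
  have hLP := matMul_trans hL hP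
  have hα1 : α - 1 ≠ 0 := ne_of_lt (by linarith [hα.2])
  have hα2 : (1 - α) - 1 ≠ 0 := ne_of_lt (by linarith [hα.1])
  obtain ⟨hTpos, -⟩ := (Rpos_iff hπ hπ1 hα hM hL).1 hpos
  have hTlt : Tsum π α M L < 1 := Tsum_lt_one hπ hπ1 hα hM hL hne
  have hpos' : 0 < Ralpha π (1 - α) L M := by
    rw [Ralpha_eq hα' hL.1 hM.1, Tsum_swap]
    exact div_pos_of_neg_of_neg (Real.log_neg hTpos hTlt) (by linarith [hα.1])
  refine ⟨L, M, hL, hM, hne.symm, hpos', ?_⟩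
  rw [Ralpha_eq hα hM.1 hL.1, Ralpha_eq hα hMP.1 hLP.1,
      Ralpha_eq hα' hL.1 hM.1, Ralpha_eq hα' hLP.1 hMP.1, Tsum_swap, Tsum_swap]
  rw [div_div_cancel_aux _ _ hα1, div_div_cancel_aux _ _ hα2]

lemma etaD_subset (hπ : ∀ x, 0 < π x) (hπ1 : ∑ x, π x = 1) (hP : IsTransMat P)
    (hα : α ∈ Set.Ioo (0:ℝ) 1) :
    {r : ℝ | ∃ M L : X → X → ℝ, IsTransMat M ∧ IsTransMat L ∧ M ≠ L ∧
      0 < Dalpha π α M L ∧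
      r = Dalpha π α (matMul M P) (matMul L P) / Dalpha π α M L} ⊆
    {r : ℝ | ∃ M L : X → X → ℝ, IsTransMat M ∧ IsTransMat L ∧ M ≠ L ∧
      0 < Dalpha π (1 - α) M L ∧
      r = Dalpha π (1 - α) (matMul M P) (matMul L P) / Dalpha π (1 - α) M L} := by
  rintro r ⟨M, L, hM, hL, hne, hpos, rfl⟩
  have hα' : 1 - α ∈ Set.Ioo (0:ℝ) 1 := ⟨by linarith [hα.2], by linarith [hα.1]⟩
  have hMP := matMul_trans hM hP
  have hLP := matMul_trans hL hP
  have hα1 : α - 1 ≠ 0 := ne_of_lt (by linarith [hα.2])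
  have hα2 : (1 - α) - 1 ≠ 0 := ne_of_lt (by linarith [hα.1])
  have hTlt : Tsum π α M L < 1 := Tsum_lt_one hπ hπ1 hα hM hL hne
  have hpos' : 0 < Dalpha π (1 - α) L M := by
    rw [Dalpha_eq hα' hL.1 hM.1, Tsum_swap]
    exact div_pos_of_neg_of_neg (by linarith) (by linarith [hα.1])
  refine ⟨L, M, hL, hM, hne.symm, hpos', ?_⟩
  rw [Dalpha_eq hα hM.1 hL.1, Dalpha_eq hα hMP.1 hLP.1,
      Dalpha_eq hα' hL.1 hM.1, Dalpha_eq hα' hLP.1 hMP.1, Tsum_swap, Tsum_swap]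
  rw [div_div_cancel_aux _ _ hα1, div_div_cancel_aux _ _ hα2]

lemma etaR_mem_bounds (hπ : ∀ x, 0 < π x) (hπ1 : ∑ x, π x = 1) (hP : IsTransMat P)
    (hγ : γ ∈ Set.Ioo (0:ℝ) 1) {r : ℝ}
    (hr : r ∈ {r : ℝ | ∃ M L : X → X → ℝ, IsTransMat M ∧ IsTransMat L ∧ M ≠ L ∧
      0 < Ralpha π γ M L ∧
      r = Ralpha π γ (matMul M P) (matMul L P) / Ralpha π γ M L}) :
    0 ≤ r ∧ r ≤ 1 := by
  obtain ⟨M, L, hM, hL, hne, hpos, rfl⟩ := hr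
  have hMP := matMul_trans hM hP
  have hLP := matMul_trans hL hP
  obtain ⟨hTpos, -⟩ := (Rpos_iff hπ hπ1 hγ hM hL).1 hpos
  have hγ1 : γ - 1 < 0 := by linarith [hγ.2]
  have hdp : Tsum π γ M L ≤ Tsum π γ (matMul M P) (matMul L P) :=
    Tsum_dp (fun x => (hπ x).le) hγ hM.1 hL.1 hP
  have hT'pos : 0 < Tsum π γ (matMul M P) (matMul L P) := lt_of_lt_of_le hTpos hdp
  have hT'le1 := Tsum_le_one hπ hπ1 hγ hMP hLP
  have hlog' : Real.log (Tsum π γ (matMul M P) (matMul L P)) ≤ 0 :=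
    Real.log_nonpos hT'pos.le hT'le1
  have hloglt : Real.log (Tsum π γ M L) < 0 :=
    Real.log_neg hTpos (Tsum_lt_one hπ hπ1 hγ hM hL hne)
  have hlogle : Real.log (Tsum π γ M L) ≤ Real.log (Tsum π γ (matMul M P) (matMul L P)) :=
    Real.log_le_log hTpos hdp
  rw [Ralpha_eq hγ hMP.1 hLP.1, Ralpha_eq hγ hM.1 hL.1]
  have hden : 0 < Real.log (Tsum π γ M L) / (γ - 1) := div_pos_of_neg_of_neg hloglt hγ1
  have hnum : 0 ≤ Real.log (Tsum π γ (matMul M P) (matMul L P)) / (γ - 1) := by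
    have h := div_nonneg (neg_nonneg.2 hlog') (neg_nonneg.2 hγ1.le)
    rwa [neg_div_neg_eq] at h
  constructor
  · exact div_nonneg hnum hden.le
  · rw [div_le_one hden, div_eq_mul_inv, div_eq_mul_inv]
    exact mul_le_mul_of_nonpos_right hlogle (inv_nonpos.2 hγ1.le)

lemma etaR_cross (hπ : ∀ x, 0 < π x) (hπ1 : ∑ x, π x = 1) (hP : IsTransMat P)
    (hα0 : 0 < α) (hαβ : α < β) (hβ1 : β < 1)
    (hM : IsTransMat M) (hL : IsTransMat L) (hne : M ≠ L) (hT : 0 < Tsum π α M L) :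
    0 < Ralpha π α M L ∧ 0 < Ralpha π β M L ∧
    α / β * ((1 - β) / (1 - α)) *
        (Ralpha π β (matMul M P) (matMul L P) / Ralpha π β M L) ≤
      Ralpha π α (matMul M P) (matMul L P) / Ralpha π α M L ∧
    Ralpha π α (matMul M P) (matMul L P) / Ralpha π α M L ≤
      β / α * ((1 - α) / (1 - β)) *
        (Ralpha π β (matMul M P) (matMul L P) / Ralpha π β M L) := by
  have hαI : α ∈ Set.Ioo (0:ℝ) 1 := ⟨hα0, by linarith⟩
  have hβI : β ∈ Set.Ioo (0:ℝ) 1 := ⟨by linarith, hβ1⟩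
  have hMP := matMul_trans hM hP
  have hLP := matMul_trans hL hP
  have hTβ : 0 < Tsum π β M L :=
    (Tsum_pos_iff hπ hβI hM.1 hL.1).2 ((Tsum_pos_iff hπ hαI hM.1 hL.1).1 hT)
  have hT'α : 0 < Tsum π α (matMul M P) (matMul L P) :=
    lt_of_lt_of_le hT (Tsum_dp (fun x => (hπ x).le) hαI hM.1 hL.1 hP)
  have hT'β : 0 < Tsum π β (matMul M P) (matMul L P) :=
    lt_of_lt_of_le hTβ (Tsum_dp (fun x => (hπ x).le) hβI hM.1 hL.1 hP)
  have k1 := key_ineq (fun x => (hπ x).le) hπ1 hM hL hαI hβI hαβ hT hTβ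
  have k2 := key_ineq (fun x => (hπ x).le) hπ1 hMP hLP hαI hβI hαβ hT'α hT'β
  have ha : Real.log (Tsum π α M L) < 0 :=
    Real.log_neg hT (Tsum_lt_one hπ hπ1 hαI hM hL hne)
  have hb : Real.log (Tsum π β M L) < 0 :=
    Real.log_neg hTβ (Tsum_lt_one hπ hπ1 hβI hM hL hne)
  have ha' : Real.log (Tsum π α (matMul M P) (matMul L P)) ≤ 0 :=
    Real.log_nonpos hT'α.le (Tsum_le_one hπ hπ1 hαI hMP hLP)
  have hb' : Real.log (Tsum π β (matMul M P) (matMul L P)) ≤ 0 :=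
    Real.log_nonpos hT'β.le (Tsum_le_one hπ hπ1 hβI hMP hLP)
  have rc := ratio_cross hα0 hαβ hβ1 ha hb ha' hb' k1.1 k1.2 k2.1 k2.2
  have hne1 : α - 1 ≠ 0 := ne_of_lt (by linarith)
  have hne2 : β - 1 ≠ 0 := ne_of_lt (by linarith)
  have eα : Ralpha π α (matMul M P) (matMul L P) / Ralpha π α M L =
      Real.log (Tsum π α (matMul M P) (matMul L P)) / Real.log (Tsum π α M L) := by
    rw [Ralpha_eq hαI hMP.1 hLP.1, Ralpha_eq hαI hM.1 hL.1, div_div_cancel_aux _ _ hne1]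
  have eβ : Ralpha π β (matMul M P) (matMul L P) / Ralpha π β M L =
      Real.log (Tsum π β (matMul M P) (matMul L P)) / Real.log (Tsum π β M L) := by
    rw [Ralpha_eq hβI hMP.1 hLP.1, Ralpha_eq hβI hM.1 hL.1, div_div_cancel_aux _ _ hne2]
  refine ⟨(Rpos_iff hπ hπ1 hαI hM hL).2 ⟨hT, hne⟩,
    (Rpos_iff hπ hπ1 hβI hM hL).2 ⟨hTβ, hne⟩, ?_, ?_⟩
  · rw [eα, eβ]; exact rc.1
  · rw [eα, eβ]; exact rc.2

end helpers

/-- Symmetry and equivalence of the ergodicity coefficients for orders in `(0,1)`. -/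
theorem stmt15 {X : Type*} [Fintype X] [Nonempty X]
    (π : X → ℝ) (hπ : ∀ x, 0 < π x) (hπ1 : ∑ x, π x = 1)
    (P : X → X → ℝ) (hP : IsTransMat P) :
    (∀ α ∈ Set.Ioo (0 : ℝ) 1,
      etaR π α P = etaR π (1 - α) P ∧ etaD π α P = etaD π (1 - α) P) ∧
    (∀ α β : ℝ, 0 < α → α < β → β < 1 →
      α / β * ((1 - β) / (1 - α)) * etaR π β P ≤ etaR π α P ∧
      etaR π α P ≤ β / α * ((1 - α) / (1 - β)) * etaR π β P) := by
  constructor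
  · intro α hα
    have hα' : 1 - α ∈ Set.Ioo (0:ℝ) 1 := ⟨by linarith [hα.2], by linarith [hα.1]⟩
    constructor
    · unfold etaR
      congr 1
      apply Set.Subset.antisymm (etaR_subset hπ hπ1 hP hα)
      have h := etaR_subset hπ hπ1 hP hα'
      rwa [sub_sub_cancel] at h
    · unfold etaD
      congr 1
      apply Set.Subset.antisymm (etaD_subset hπ hπ1 hP hα)
      have h := etaD_subset hπ hπ1 hP hα'
      rwa [sub_sub_cancel] at h
  · intro α β hα0 hαβ hβ1
    have hαI : α ∈ Set.Ioo (0:ℝ) 1 := ⟨hα0, by linarith⟩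
    have hβI : β ∈ Set.Ioo (0:ℝ) 1 := ⟨by linarith, hβ1⟩
    have hβ0 : (0:ℝ) < β := by linarith
    have h1α : (0:ℝ) < 1 - α := by linarith
    have h1β : (0:ℝ) < 1 - β := by linarith
    set Sα := {r : ℝ | ∃ M L : X → X → ℝ, IsTransMat M ∧ IsTransMat L ∧ M ≠ L ∧
      0 < Ralpha π α M L ∧
      r = Ralpha π α (matMul M P) (matMul L P) / Ralpha π α M L} with hSα
    set Sβ := {r : ℝ | ∃ M L : X → X → ℝ, IsTransMat M ∧ IsTransMat L ∧ M ≠ L ∧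
      0 < Ralpha π β M L ∧
      r = Ralpha π β (matMul M P) (matMul L P) / Ralpha π β M L} with hSβ
    have eα : etaR π α P = sSup Sα := rfl
    have eβ : etaR π β P = sSup Sβ := rfl
    have bddα : BddAbove Sα := ⟨1, fun r hr => (etaR_mem_bounds hπ hπ1 hP hαI hr).2⟩
    have bddβ : BddAbove Sβ := ⟨1, fun r hr => (etaR_mem_bounds hπ hπ1 hP hβI hr).2⟩
    have nnα : 0 ≤ sSup Sα := Real.sSup_nonneg fun r hr => (etaR_mem_bounds hπ hπ1 hP hαI hr).1
    have nnβ : 0 ≤ sSup Sβ := Real.sSup_nonneg fun r hr => (etaR_mem_bounds hπ hπ1 hP hβI hr).1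
    have hc₁ : (0:ℝ) < α / β * ((1 - β) / (1 - α)) :=
      mul_pos (div_pos hα0 hβ0) (div_pos h1β h1α)
    have hc₂ : (0:ℝ) < β / α * ((1 - α) / (1 - β)) :=
      mul_pos (div_pos hβ0 hα0) (div_pos h1α h1β)
    rw [eα, eβ]
    constructor
    · rcases Set.eq_empty_or_nonempty Sβ with he | hne
      · rw [he, Real.sSup_empty, mul_zero]; exact nnα
      · have hle : sSup Sβ ≤ sSup Sα / (α / β * ((1 - β) / (1 - α))) := by
          apply csSup_le hne
          rintro r ⟨M, L, hM, hL, hneML, hposβ, rfl⟩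
          have hTβ := ((Rpos_iff hπ hπ1 hβI hM hL).1 hposβ).1
          have hTα : 0 < Tsum π α M L :=
            (Tsum_pos_iff hπ hαI hM.1 hL.1).2 ((Tsum_pos_iff hπ hβI hM.1 hL.1).1 hTβ)
          obtain ⟨hRα, hRβ, hcr1, hcr2⟩ := etaR_cross hπ hπ1 hP hα0 hαβ hβ1 hM hL hneML hTα
          rw [le_div_iff₀ hc₁]
          calc (Ralpha π β (matMul M P) (matMul L P) / Ralpha π β M L) *
                (α / β * ((1 - β) / (1 - α)))
              = α / β * ((1 - β) / (1 - α)) *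
                (Ralpha π β (matMul M P) (matMul L P) / Ralpha π β M L) := by ring
            _ ≤ Ralpha π α (matMul M P) (matMul L P) / Ralpha π α M L := hcr1
            _ ≤ sSup Sα := le_csSup bddα ⟨M, L, hM, hL, hneML, hRα, rfl⟩
        calc α / β * ((1 - β) / (1 - α)) * sSup Sβ
            ≤ α / β * ((1 - β) / (1 - α)) * (sSup Sα / (α / β * ((1 - β) / (1 - α)))) :=
              mul_le_mul_of_nonneg_left hle hc₁.le
          _ = sSup Sα := by field_simp
    · rcases Set.eq_empty_or_nonempty Sα with he | hne
      · rw [he, Real.sSup_empty]; exact mul_nonneg hc₂.le nnβ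
      · apply csSup_le hne
        rintro r ⟨M, L, hM, hL, hneML, hposα, rfl⟩
        have hTα := ((Rpos_iff hπ hπ1 hαI hM hL).1 hposα).1
        obtain ⟨hRα, hRβ, hcr1, hcr2⟩ := etaR_cross hπ hπ1 hP hα0 hαβ hβ1 hM hL hneML hTα
        calc Ralpha π α (matMul M P) (matMul L P) / Ralpha π α M L
            ≤ β / α * ((1 - α) / (1 - β)) *
              (Ralpha π β (matMul M P) (matMul L P) / Ralpha π β M L) := hcr2
          _ ≤ β / α * ((1 - α) / (1 - β)) * sSup Sβ :=
              mul_le_mul_of_nonneg_left (le_csSup bddβ ⟨M, L, hM, hL, hneML, hRβ, rfl⟩) hc₂.le
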